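/- Let (A, *, α) be a regular Hom-Jacobi-Jordan algebra (α invertible) and s an integer. Define ad_s(u)(v) = α^s(u)*v. Then (A, ad_s, α) is a representation of (A, *, α), i.e., α∘ad_s(u) = ad_s(α(u))∘α and ad_s(u*v)∘α = −ad_s(α(u))∘ad_s(v) − ad_s(α(v))∘ad_s(u) for all u, v ∈ A. -/

import Mathlib

theorem stmt15 {K : Type*} [Field K] {A : Type*} [AddCommGroup A] [Module K A]
    (mm : A →ₗ[K] A →ₗ[K] A) (al : A ≃ₗ[K] A)
    (hcomm : ∀ x y, mm x y = mm y x)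
    (hmult : ∀ x y, al (mm x y) = mm (al x) (al y))
    (hjac : ∀ x y z, mm (mm x y) (al z) + mm (mm y z) (al x) + mm (mm z x) (al y) = 0)
    (s : ℤ) :
    (∀ u v : A, al (mm ((al ^ s) u) v) = mm ((al ^ s) (al u)) (al v)) ∧
    (∀ u v w : A, mm ((al ^ s) (mm u v)) (al w)
      = -(mm ((al ^ s) (al u)) (mm ((al ^ s) v) w))
        - mm ((al ^ s) (al v)) (mm ((al ^ s) u) w)) := by
  have hinv : ∀ x y, al.symm (mm x y) = mm (al.symm x) (al.symm y) := by
    intro x y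
    apply al.injective
    rw [hmult, al.apply_symm_apply, al.apply_symm_apply, al.apply_symm_apply]
  have hmulapp : ∀ (f g : A ≃ₗ[K] A) (x : A), (f * g) x = f (g x) := fun _ _ _ => rfl
  have hpow : ∀ t : ℤ, ∀ x y, (al ^ t) (mm x y) = mm ((al ^ t) x) ((al ^ t) y) := by
    intro t
    induction t using Int.induction_on with
    | zero => simp
    | succ n ih =>
      intro x y
      have h1 : al ^ ((n : ℤ) + 1) = al * al ^ (n : ℤ) := by
        rw [add_comm, zpow_one_add]
      rw [h1, hmulapp, hmulapp, hmulapp, ih, hmult]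
    | pred n ih =>
      intro x y
      have h1 : al ^ (-(n : ℤ) - 1) = al⁻¹ * al ^ (-(n : ℤ)) := by
        rw [show -(n : ℤ) - 1 = -1 + -(n : ℤ) by ring, zpow_add, zpow_neg_one]
      have hinv' : (al⁻¹ : A ≃ₗ[K] A) = al.symm := rfl
      rw [h1, hmulapp, hmulapp, hmulapp, ih, hinv', hinv]
  have hcommal : ∀ x, (al ^ s) (al x) = al ((al ^ s) x) := by
    intro x
    have hc : al ^ s * al = al * al ^ s := (Commute.refl al).zpow_left s
    rw [← hmulapp, ← hmulapp, hc]
  refine ⟨fun u v => by rw [hmult, hcommal], fun u v w => ?_⟩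
  have h := hjac ((al ^ s) u) ((al ^ s) v) w
  rw [add_assoc] at h
  have h2 := eq_neg_of_add_eq_zero_left h
  rw [hpow s u v, h2, neg_add, hcommal, hcommal, hcomm (mm ((al ^ s) v) w),
    hcomm w ((al ^ s) u), hcomm (mm ((al ^ s) u) w), sub_eq_add_neg]
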